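/- (Relating smooth min- and max-relative entropies) For density matrices ρ, σ and ε₁, ε₂ ≥ 0 with ε₁ + ε₂ < 1: D_min^{ε₁}(ρ‖σ) ≤ D_max^{ε₂}(ρ‖σ) + log₂(1/(1 − ε₁ − ε₂)). -/

import Mathlib

open Matrix
open scoped BigOperators ComplexOrder

/-- Apply a real function to a Hermitian matrix via its spectral decomposition
(junk value `0` for non-Hermitian input). -/
noncomputable def mfun {n : Type*} [Fintype n] [DecidableEq n]
    (f : ℝ → ℝ) (A : Matrix n n ℂ) : Matrix n n ℂ :=
  if h : A.IsHermitian then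
    (h.eigenvectorUnitary : Matrix n n ℂ) *
      Matrix.diagonal (fun i => (f (h.eigenvalues i) : ℂ)) *
      star (h.eigenvectorUnitary : Matrix n n ℂ)
  else 0

/-- Real power of a Hermitian matrix. -/
noncomputable def mpow {n : Type*} [Fintype n] [DecidableEq n]
    (A : Matrix n n ℂ) (p : ℝ) : Matrix n n ℂ :=
  mfun (fun x => x ^ p) A

/-- Square root of a positive semidefinite matrix. -/
noncomputable def msqrt {n : Type*} [Fintype n] [DecidableEq n]
    (A : Matrix n n ℂ) : Matrix n n ℂ :=
  mfun Real.sqrt A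

/-- Trace norm (Schatten 1-norm). -/
noncomputable def traceNorm {n : Type*} [Fintype n] [DecidableEq n]
    (A : Matrix n n ℂ) : ℝ :=
  ((msqrt (Aᴴ * A)).trace).re

/-- Schatten `p`-norm. -/
noncomputable def schattenNorm {n : Type*} [Fintype n] [DecidableEq n]
    (p : ℝ) (A : Matrix n n ℂ) : ℝ :=
  (((mfun (fun x => x ^ (p / 2)) (Aᴴ * A)).trace).re) ^ (1 / p)

/-- Uhlmann fidelity `‖√ρ √σ‖₁²`. -/
noncomputable def fidelity {n : Type*} [Fintype n] [DecidableEq n]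
    (ρ σ : Matrix n n ℂ) : ℝ :=
  (traceNorm (msqrt ρ * msqrt σ)) ^ 2

/-- A density matrix: positive semidefinite with unit trace. -/
def IsDensity {n : Type*} [Fintype n] (ρ : Matrix n n ℂ) : Prop :=
  ρ.PosSemidef ∧ ρ.trace = 1

/-- A CPTP map (quantum channel): Choi matrix PSD and trace preserving. -/
def IsCPTP {I J : Type*} [Fintype I] [DecidableEq I] [Fintype J] [DecidableEq J]
    (N : Matrix I I ℂ →ₗ[ℂ] Matrix J J ℂ) : Prop :=
  (Matrix.of (fun (p q : I × J) =>
      N (Matrix.single p.1 q.1 1) p.2 q.2)).PosSemidef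
  ∧ ∀ A : Matrix I I ℂ, (N A).trace = A.trace

/-- `P` is the orthogonal projection onto the support of `ρ`. -/
def IsSupportProj {n : Type*} [Fintype n] (ρ P : Matrix n n ℂ) : Prop :=
  P.IsHermitian ∧ P * P = P ∧
    LinearMap.range P.mulVecLin = LinearMap.range ρ.mulVecLin

/-- Max-relative entropy `D_max(ρ‖σ) := inf {λ ≥ 0 : ρ ≤ 2^λ σ}` (with value `⊤` if
no such `λ` exists). -/
noncomputable def Dmax {n : Type*} [Fintype n] (ρ σ : Matrix n n ℂ) : EReal :=
  sInf {x : EReal | ∃ l : ℝ, 0 ≤ l ∧ (((2:ℝ) ^ l) • σ - ρ).PosSemidef ∧ x = (l : EReal)}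

/-- Smooth max-relative entropy (trace-distance smoothing). -/
noncomputable def DmaxSmooth {n : Type*} [Fintype n] [DecidableEq n]
    (ε : ℝ) (ρ σ : Matrix n n ℂ) : EReal :=
  sInf {x : EReal | ∃ ρt : Matrix n n ℂ, IsDensity ρt ∧
    (1/2) * traceNorm (ρt - ρ) ≤ ε ∧ x = Dmax ρt σ}

/-- Smooth min-relative entropy (hypothesis testing relative entropy). -/
noncomputable def DminSmooth {n : Type*} [Fintype n] [DecidableEq n]
    (ε : ℝ) (ρ σ : Matrix n n ℂ) : ℝ :=
  - Real.logb 2 (sInf {t : ℝ | ∃ Λ : Matrix n n ℂ, Λ.PosSemidef ∧ (1 - Λ).PosSemidef ∧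
      1 - ε ≤ ((Λ * ρ).trace).re ∧ t = ((Λ * σ).trace).re})

/-- Petz–Rényi relative entropy `D_α(ρ‖σ) = (α−1)⁻¹ log₂ Tr[ρ^α σ^{1−α}]`. -/
noncomputable def Dpetz {n : Type*} [Fintype n] [DecidableEq n]
    (α : ℝ) (ρ σ : Matrix n n ℂ) : ℝ :=
  (α - 1)⁻¹ * Real.logb 2 (((mpow ρ α * mpow σ (1 - α)).trace).re)

/-- Sandwiched Rényi relative entropy
`D̃_α(ρ‖σ) = (α−1)⁻¹ log₂ Tr[(σ^{(1−α)/2α} ρ σ^{(1−α)/2α})^α]`. -/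
noncomputable def Dsand {n : Type*} [Fintype n] [DecidableEq n]
    (α : ℝ) (ρ σ : Matrix n n ℂ) : ℝ :=
  (α - 1)⁻¹ * Real.logb 2
    (((mpow (mpow σ ((1 - α)/(2*α)) * ρ * mpow σ ((1 - α)/(2*α))) α).trace).re)

/-- Umegaki relative entropy `D(ρ‖σ) = Tr[ρ (log₂ ρ − log₂ σ)]`. -/
noncomputable def relEnt {n : Type*} [Fintype n] [DecidableEq n]
    (ρ σ : Matrix n n ℂ) : ℝ :=
  ((ρ * (mfun (Real.logb 2) ρ - mfun (Real.logb 2) σ)).trace).re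

/-- `n`-fold tensor (Kronecker) power of a matrix. -/
noncomputable def tpow {I : Type*} (A : Matrix I I ℂ) (k : ℕ) :
    Matrix (Fin k → I) (Fin k → I) ℂ :=
  Matrix.of fun i j => ∏ t, A (i t) (j t)

/-- The qubit state `|0⟩⟨0|`. -/
noncomputable def e00 : Matrix (Fin 2) (Fin 2) ℂ := Matrix.single 0 0 1

/-- The qubit state `|1⟩⟨1|`. -/
noncomputable def e11 : Matrix (Fin 2) (Fin 2) ℂ := Matrix.single 1 1 1

/-- The state `π_M = M⁻¹|0⟩⟨0| + (1 − M⁻¹)|1⟩⟨1|`. -/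
noncomputable def piM (M : ℝ) : Matrix (Fin 2) (Fin 2) ℂ :=
  (M⁻¹ : ℝ) • e00 + ((1 - M⁻¹ : ℝ)) • e11

section PsdSqrtPort

open scoped MatrixOrder

variable {n : Type*} [Fintype n] [DecidableEq n]

noncomputable abbrev Matrix.PosSemidef.sqrt {A : Matrix n n ℂ} (_hA : A.PosSemidef) :
    Matrix n n ℂ := CFC.sqrt A

lemma Matrix.PosSemidef.posSemidef_sqrt {A : Matrix n n ℂ} (hA : A.PosSemidef) :
    hA.sqrt.PosSemidef := Matrix.nonneg_iff_posSemidef.mp (CFC.sqrt_nonneg A)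

lemma Matrix.PosSemidef.sqrt_mul_self {A : Matrix n n ℂ} (hA : A.PosSemidef) :
    hA.sqrt * hA.sqrt = A := CFC.sqrt_mul_sqrt_self A hA.nonneg

lemma Matrix.PosSemidef.eq_sqrt_of_sq_eq {A B : Matrix n n ℂ} (hB : B.PosSemidef)
    (hA : A.PosSemidef) (h : B ^ 2 = A) : B = hA.sqrt :=
  ((CFC.sqrt_eq_iff A B hA.nonneg hB.nonneg).mpr (by rw [← sq]; exact h)).symm

lemma Matrix.PosSemidef.msqrt_eq_sqrt {A : Matrix n n ℂ} (hA : A.PosSemidef) :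
    msqrt A = hA.sqrt := by
  rw [msqrt, mfun, dif_pos hA.1, Matrix.PosSemidef.sqrt, CFC.sqrt_eq_cfc,
    cfc_nnreal_eq_real _ A, hA.1.cfc_eq]
  simp only [Matrix.IsHermitian.cfc, Unitary.conjStarAlgAut_apply]
  congr 2
  congr 1
  funext i
  simp [hA.eigenvalues_nonneg i]

end PsdSqrtPort

namespace DminDmaxAux

open scoped ComplexOrder

variable {n : Type*} [Fintype n] [DecidableEq n]

lemma diag_re_nonneg {M : Matrix n n ℂ} (hM : M.PosSemidef) (i : n) :
    0 ≤ (M i i).re := by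
  have h := hM.dotProduct_mulVec_nonneg (Pi.single i 1)
  have : star (Pi.single i 1) ⬝ᵥ M *ᵥ Pi.single i 1 = M i i := by
    rw [mulVec_single]
    simp [dotProduct, Pi.single_apply, Finset.sum_ite_eq']
  rw [this] at h
  exact (Complex.le_def.mp h).1

lemma trace_re_nonneg {M : Matrix n n ℂ} (hM : M.PosSemidef) :
    0 ≤ (M.trace).re := by
  rw [Matrix.trace, Complex.re_sum]
  exact Finset.sum_nonneg fun i _ => diag_re_nonneg hM i

lemma trace_mul_psd_nonneg {A B : Matrix n n ℂ} (hA : A.PosSemidef) (hB : B.PosSemidef) :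
    0 ≤ ((A * B).trace).re := by
  have hs := hA.posSemidef_sqrt
  have h1 : A * B = hA.sqrt * (hA.sqrt * B) := by
    rw [← mul_assoc, hA.sqrt_mul_self]
  have h2 : (A * B).trace = (hA.sqrt * B * hA.sqrt).trace := by
    rw [h1, Matrix.trace_mul_comm, mul_assoc]
  rw [h2]
  have : (hA.sqrt * B * hA.sqrt).PosSemidef := by
    have := hB.mul_mul_conjTranspose_same hA.sqrt
    rwa [hs.isHermitian.eq] at this
  exact trace_re_nonneg this

lemma conj_mul_conj (U A B : Matrix n n ℂ) (hU : star U * U = 1) :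
    (U * A * star U) * (U * B * star U) = U * (A * B) * star U := by
  simp only [mul_assoc]
  rw [← mul_assoc (star U) U, hU, one_mul]

lemma trace_conj_unitary (U D : Matrix n n ℂ) (hU : star U * U = 1) :
    (U * D * star U).trace = D.trace := by
  rw [Matrix.trace_mul_cycle, hU, one_mul]

lemma msqrt_eq {A : Matrix n n ℂ} (hA : A.PosSemidef) : msqrt A = hA.sqrt := by
  exact hA.msqrt_eq_sqrt

lemma traceNorm_hermitian {Δ : Matrix n n ℂ} (hΔ : Δ.IsHermitian) :
    traceNorm Δ = ∑ i, |hΔ.eigenvalues i| := by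
  have hsq : (Δᴴ * Δ).PosSemidef := Matrix.posSemidef_conjTranspose_mul_self Δ
  set U : Matrix n n ℂ := (hΔ.eigenvectorUnitary : Matrix n n ℂ) with hUdef
  have hU : star U * U = 1 := Matrix.UnitaryGroup.star_mul_self _
  set d : n → ℂ := fun i => ((|hΔ.eigenvalues i| : ℝ) : ℂ) with hd
  set B : Matrix n n ℂ := U * Matrix.diagonal d * star U with hB
  have hBpsd : B.PosSemidef := by
    apply Matrix.PosSemidef.mul_mul_conjTranspose_same
    refine Matrix.posSemidef_diagonal_iff.mpr fun i => ?_
    rw [hd]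
    exact Complex.zero_le_real.mpr (abs_nonneg _)
  have hB2 : B ^ 2 = Δᴴ * Δ := by
    have hΔspec : Δ = U * Matrix.diagonal (fun i => ((hΔ.eigenvalues i : ℝ) : ℂ)) * star U := by
      rw [hUdef]; exact hΔ.spectral_theorem
    have hdd : Matrix.diagonal (fun i => d i * d i)
        = Matrix.diagonal (fun i => ((hΔ.eigenvalues i : ℝ) : ℂ) * ((hΔ.eigenvalues i : ℝ) : ℂ)) := by
      refine congrArg Matrix.diagonal (funext fun i => ?_)
      simp only [hd]
      rw [← Complex.ofReal_mul, ← Complex.ofReal_mul]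
      exact congrArg _ (abs_mul_abs_self _)
    rw [pow_two, hB, conj_mul_conj _ _ _ hU, hΔ.eq]
    conv_rhs => rw [hΔspec]
    rw [conj_mul_conj _ _ _ hU, Matrix.diagonal_mul_diagonal, Matrix.diagonal_mul_diagonal, hdd]
  have hBsqrt : B = hsq.sqrt := hBpsd.eq_sqrt_of_sq_eq hsq hB2
  rw [traceNorm, msqrt_eq hsq, ← hBsqrt, hB, trace_conj_unitary _ _ hU, Matrix.trace_diagonal]
  rw [Complex.re_sum]
  simp [hd]

lemma re_trace_mul_le {Λ Δ : Matrix n n ℂ} (hΛ : Λ.PosSemidef) (hΛ1 : (1 - Λ).PosSemidef)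
    (hΔ : Δ.IsHermitian) :
    ((Λ * Δ).trace).re ≤ (1/2) * ((∑ i, |hΔ.eigenvalues i|) + (∑ i, hΔ.eigenvalues i)) := by
  set U : Matrix n n ℂ := (hΔ.eigenvectorUnitary : Matrix n n ℂ) with hUdef
  have hU : star U * U = 1 := Matrix.UnitaryGroup.star_mul_self _
  have hUH : (star U)ᴴ = U := by
    rw [Matrix.star_eq_conjTranspose, Matrix.conjTranspose_conjTranspose]
  set M : Matrix n n ℂ := star U * Λ * U with hM
  have hMpsd : M.PosSemidef := by
    have := hΛ.mul_mul_conjTranspose_same (star U)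
    rwa [hUH] at this
  have hM1 : (1 - M).PosSemidef := by
    have := hΛ1.mul_mul_conjTranspose_same (star U)
    rw [hUH] at this
    have e : star U * (1 - Λ) * U = 1 - M := by
      rw [mul_sub, sub_mul, mul_one, hU, hM]
    rwa [e] at this
  have htr : (Λ * Δ).trace = ∑ i, M i i * (hΔ.eigenvalues i : ℂ) := by
    have hspec : Δ = U * Matrix.diagonal (fun i => ((hΔ.eigenvalues i : ℝ) : ℂ)) * star U := by
      rw [hUdef]; exact hΔ.spectral_theorem
    calc (Λ * Δ).trace
        = (Λ * (U * Matrix.diagonal (fun i => ((hΔ.eigenvalues i : ℝ) : ℂ)) * star U)).trace := by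
          rw [← hspec]
      _ = (M * Matrix.diagonal (fun i => ((hΔ.eigenvalues i : ℝ) : ℂ))).trace := by
          rw [hM]
          rw [show Λ * (U * Matrix.diagonal (fun i => ((hΔ.eigenvalues i : ℝ) : ℂ)) * star U)
            = (Λ * U * Matrix.diagonal (fun i => ((hΔ.eigenvalues i : ℝ) : ℂ))) * star U by
              simp only [mul_assoc]]
          rw [Matrix.trace_mul_comm, ← mul_assoc, ← mul_assoc]
      _ = ∑ i, M i i * (hΔ.eigenvalues i : ℂ) := by
          simp [Matrix.trace, Matrix.diag, Matrix.mul_diagonal]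
  rw [htr, Complex.re_sum]
  have hterm : ∀ i, (M i i * (hΔ.eigenvalues i : ℂ)).re
      ≤ (1/2) * (|hΔ.eigenvalues i| + hΔ.eigenvalues i) := by
    intro i
    have hre : (M i i * (hΔ.eigenvalues i : ℂ)).re = (M i i).re * hΔ.eigenvalues i := by
      simp [Complex.mul_re]
    have h0 : 0 ≤ (M i i).re := diag_re_nonneg hMpsd i
    have h1 : (M i i).re ≤ 1 := by
      have := diag_re_nonneg hM1 i
      simp only [Matrix.sub_apply, Matrix.one_apply_eq, Complex.sub_re, Complex.one_re] at this
      linarith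
    rw [hre]
    rcases le_or_gt 0 (hΔ.eigenvalues i) with hpos | hneg
    · rw [abs_of_nonneg hpos]; nlinarith
    · rw [abs_of_neg hneg]; nlinarith
  calc ∑ i, (M i i * (hΔ.eigenvalues i : ℂ)).re
      ≤ ∑ i, (1/2) * (|hΔ.eigenvalues i| + hΔ.eigenvalues i) :=
        Finset.sum_le_sum fun i _ => hterm i
    _ = (1/2) * ((∑ i, |hΔ.eigenvalues i|) + ∑ i, hΔ.eigenvalues i) := by
        rw [← Finset.mul_sum, Finset.sum_add_distrib]

lemma re_trace_eq_sum_eigenvalues {Δ : Matrix n n ℂ} (hΔ : Δ.IsHermitian) :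
    (Δ.trace).re = ∑ i, hΔ.eigenvalues i := by
  have hU : star (hΔ.eigenvectorUnitary : Matrix n n ℂ) * (hΔ.eigenvectorUnitary : Matrix n n ℂ)
      = 1 := Matrix.UnitaryGroup.star_mul_self _
  conv_lhs => rw [hΔ.spectral_theorem]
  rw [Unitary.conjStarAlgAut_apply]
  rw [show (RCLike.ofReal ∘ hΔ.eigenvalues : n → ℂ) = fun i => ((hΔ.eigenvalues i : ℝ) : ℂ) from rfl]
  rw [trace_conj_unitary _ _ hU, Matrix.trace_diagonal, Complex.re_sum]
  simp

/-- The key bound: Re tr(Λ ρ̃) ≥ Re tr(Λ ρ) − (1/2)‖ρ̃ − ρ‖₁ for density matrices. -/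
lemma re_trace_mul_ge {Λ ρ ρt : Matrix n n ℂ} (hΛ : Λ.PosSemidef) (hΛ1 : (1 - Λ).PosSemidef)
    (hρ : IsDensity ρ) (hρt : IsDensity ρt) :
    ((Λ * ρ).trace).re - (1/2) * traceNorm (ρt - ρ) ≤ ((Λ * ρt).trace).re := by
  set Δ : Matrix n n ℂ := ρ - ρt with hΔdef
  have hΔ : Δ.IsHermitian := hρ.1.1.sub hρt.1.1
  have htrΔ : (Δ.trace).re = 0 := by
    rw [hΔdef, Matrix.trace_sub, hρ.2, hρt.2]
    simp
  have hsum : ∑ i, hΔ.eigenvalues i = 0 := by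
    rw [← re_trace_eq_sum_eigenvalues hΔ, htrΔ]
  have hkey := re_trace_mul_le hΛ hΛ1 hΔ
  rw [hsum, add_zero] at hkey
  have hTN : traceNorm (ρt - ρ) = ∑ i, |hΔ.eigenvalues i| := by
    have hneg : ρt - ρ = -Δ := by rw [hΔdef]; abel
    have : traceNorm (ρt - ρ) = traceNorm Δ := by
      rw [hneg, traceNorm]
      rw [show (-Δ)ᴴ * (-Δ) = Δᴴ * Δ by rw [Matrix.conjTranspose_neg, neg_mul_neg]]
      rfl
    rw [this, traceNorm_hermitian hΔ]
  have hsplit : (Λ * Δ).trace = (Λ * ρ).trace - (Λ * ρt).trace := by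
    rw [hΔdef, mul_sub, Matrix.trace_sub]
  have : ((Λ * Δ).trace).re = ((Λ * ρ).trace).re - ((Λ * ρt).trace).re := by
    rw [hsplit, Complex.sub_re]
  rw [this] at hkey
  rw [hTN]
  linarith

/-- Main real-valued inequality. -/
lemma key_real (ρ σ ρt : Matrix n n ℂ) (hρ : IsDensity ρ) (hσ : IsDensity σ)
    (hρt : IsDensity ρt) (ε₁ ε₂ : ℝ) (h1 : 0 ≤ ε₁) (h12 : ε₁ + ε₂ < 1)
    (hclose : (1/2) * traceNorm (ρt - ρ) ≤ ε₂)
    (l : ℝ) (hl : 0 ≤ l) (hpsd : (((2:ℝ) ^ l) • σ - ρt).PosSemidef) :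
    DminSmooth ε₁ ρ σ ≤ l + Real.logb 2 (1/(1 - ε₁ - ε₂)) := by
  set S : Set ℝ := {t : ℝ | ∃ Λ : Matrix n n ℂ, Λ.PosSemidef ∧ (1 - Λ).PosSemidef ∧
      1 - ε₁ ≤ ((Λ * ρ).trace).re ∧ t = ((Λ * σ).trace).re} with hS
  have hne : S.Nonempty := by
    refine ⟨((((1 : Matrix n n ℂ)) * σ).trace).re, 1, Matrix.PosSemidef.one, ?_, ?_, rfl⟩
    · rw [sub_self]; exact Matrix.PosSemidef.zero
    · rw [one_mul, hρ.2]
      norm_num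
      linarith
  set c : ℝ := (1 - ε₁ - ε₂) / (2:ℝ) ^ l with hc
  have h2l : (0:ℝ) < (2:ℝ) ^ l := Real.rpow_pos_of_pos (by norm_num) l
  have hcpos : 0 < c := div_pos (by linarith) h2l
  have hlb : ∀ t ∈ S, c ≤ t := by
    rintro t ⟨Λ, hΛ, hΛ1, hΛρ, rfl⟩
    have h0 := trace_mul_psd_nonneg hΛ hpsd
    have hexp : (Λ * (((2:ℝ) ^ l) • σ - ρt)).trace
        = ((((2:ℝ) ^ l : ℝ)) : ℂ) * (Λ * σ).trace - (Λ * ρt).trace := by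
      rw [mul_sub, Matrix.trace_sub, Matrix.mul_smul, Matrix.trace_smul]
      rw [Complex.real_smul]
    have h0' : 0 ≤ ((2:ℝ) ^ l) * ((Λ * σ).trace).re - ((Λ * ρt).trace).re := by
      rw [hexp] at h0
      have : (((((2:ℝ) ^ l : ℝ)) : ℂ) * (Λ * σ).trace - (Λ * ρt).trace).re
          = ((2:ℝ) ^ l) * ((Λ * σ).trace).re - ((Λ * ρt).trace).re := by
        rw [Complex.sub_re, Complex.re_ofReal_mul]
      rwa [this] at h0
    have hrt : 1 - ε₁ - ε₂ ≤ ((Λ * ρt).trace).re := by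
      have := re_trace_mul_ge hΛ hΛ1 hρ hρt
      linarith
    rw [hc, div_le_iff₀ h2l]
    linarith [mul_comm ((2:ℝ) ^ l) (((Λ * σ).trace).re)]
  have hinf : c ≤ sInf S := le_csInf hne hlb
  have hinfpos : 0 < sInf S := lt_of_lt_of_le hcpos hinf
  have hlog : Real.logb 2 c ≤ Real.logb 2 (sInf S) :=
    Real.logb_le_logb_of_le (by norm_num) hcpos hinf
  have hlogc : Real.logb 2 c = Real.logb 2 (1 - ε₁ - ε₂) - l := by
    rw [hc, Real.logb_div (by linarith) (ne_of_gt h2l), Real.logb_rpow (by norm_num) (by norm_num)]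
  have hfinal : Real.logb 2 (1/(1 - ε₁ - ε₂)) = - Real.logb 2 (1 - ε₁ - ε₂) := by
    rw [one_div, Real.logb_inv]
  rw [DminSmooth, ← hS, hfinal]
  have : - Real.logb 2 (sInf S) ≤ - Real.logb 2 c := by linarith
  calc - Real.logb 2 (sInf S) ≤ - Real.logb 2 c := this
    _ = l + - Real.logb 2 (1 - ε₁ - ε₂) := by rw [hlogc]; ring

end DminDmaxAux

theorem dminSmooth_le_dmaxSmooth {n : Type*} [Fintype n] [DecidableEq n]
    (ρ σ : Matrix n n ℂ) (hρ : IsDensity ρ) (hσ : IsDensity σ)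
    (ε₁ ε₂ : ℝ) (h1 : 0 ≤ ε₁) (h2 : 0 ≤ ε₂) (h12 : ε₁ + ε₂ < 1) :
    ((DminSmooth ε₁ ρ σ : ℝ) : EReal)
      ≤ DmaxSmooth ε₂ ρ σ + ((Real.logb 2 (1/(1 - ε₁ - ε₂)) : ℝ) : EReal) := by
  open DminDmaxAux in
  set c : ℝ := Real.logb 2 (1/(1 - ε₁ - ε₂)) with hcdef
  set L : ℝ := DminSmooth ε₁ ρ σ with hLdef
  suffices h : ((L - c : ℝ) : EReal) ≤ DmaxSmooth ε₂ ρ σ by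
    have h2' := add_le_add_left h ((c : ℝ) : EReal)
    have he : ((L : ℝ) : EReal) = ((L - c : ℝ) : EReal) + ((c : ℝ) : EReal) := by
      rw [← EReal.coe_add]
      norm_num
    rw [he]
    exact h2'
  rw [DmaxSmooth]
  refine le_sInf ?_
  rintro x ⟨ρt, hρt, hclose, rfl⟩
  rw [Dmax]
  refine le_sInf ?_
  rintro y ⟨l, hl, hpsd, rfl⟩
  rw [EReal.coe_le_coe_iff]
  have := key_real ρ σ ρt hρ hσ hρt ε₁ ε₂ h1 h12 hclose l hl hpsd
  linarith
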